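/- Let X be a Hilbert space and f : X → (-∞, ∞] a proper, lower semicontinuous, convex function with nonempty solution set S = argmin f. Let x̄ ∈ S and f* = f(x̄). Suppose there exist r > 0, η > 0 and a desingularizing function φ ∈ C[0,η) ∩ C¹(0,η) with φ(0) = 0, φ concave, φ' > 0 on (0,η), such that φ'(f(x) - f*) · d(0, ∂f(x)) ≥ 1 for all x ∈ B_r(x̄) with f* < f(x) < f* + η. Then d(x, S) ≤ 2 φ(f(x) - f*) for all x ∈ B_r(x̄) with f* ≤ f(x) < f* + η. -/

import Mathlib

open Metric Set Filter Topology

set_option maxHeartbeats 1000000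

section aux
variable {X : Type*} [NormedAddCommGroup X] [InnerProductSpace ℝ X] [CompleteSpace X]

local notation "⟪" x ", " y "⟫" => @inner ℝ _ _ x y

lemma klgb_prox_exists (f : X → EReal) (hbot : ∀ x, f x ≠ ⊥)
    (hlsc : LowerSemicontinuous f)
    (hconv : ∀ x y : X, ∀ t : ℝ, 0 ≤ t → t ≤ 1 →
      f (t • x + (1 - t) • y) ≤ (t : EReal) * f x + ((1 - t : ℝ) : EReal) * f y)
    (xb : X) (hxbtop : f xb ≠ ⊤) (hxbmin : ∀ y, f xb ≤ f y)
    (lam : ℝ) (hlam : 0 < lam) (y : X) (hytop : f y ≠ ⊤) :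
    ∃ p : X, ∀ z : X, f p + (((inner ℝ ((1/lam) • (y - p)) (z - p) : ℝ)) : EReal) ≤ f z := by
  classical
  set c : ℝ := 1/(2*lam) with hc
  have hcpos : 0 < c := by positivity
  set F : X → EReal := fun z => f z + ((c * ‖z - y‖^2 : ℝ) : EReal) with hF
  have hfle : ∀ z, f z ≤ F z := by
    intro z
    have h0 : (0:EReal) ≤ ((c * ‖z - y‖^2 : ℝ) : EReal) := by
      rw [← EReal.coe_zero, EReal.coe_le_coe_iff]; positivity
    exact le_add_of_nonneg_right h0
  have hFlb : ∀ z, f xb ≤ F z := fun z => (hxbmin z).trans (hfle z)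
  set m : EReal := ⨅ z, F z with hm
  have hmlb : f xb ≤ m := le_iInf hFlb
  have hmub : m ≤ f y := by
    have h1 : F y ≤ f y := by
      rw [hF]; simp
    exact (iInf_le _ y).trans h1
  have hmbot : m ≠ ⊥ := fun h => hbot xb (bot_unique (h ▸ hmlb))
  have hmtop : m ≠ ⊤ := ne_top_of_le_ne_top hytop hmub
  set M : ℝ := m.toReal with hM
  have hmM : m = (M : EReal) := (EReal.coe_toReal hmtop hmbot).symm
  have hseq : ∀ n : ℕ, ∃ z : X, F z < m + ((1/(n+1) : ℝ) : EReal) := by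
    intro n
    have hlt : m < m + ((1/(n+1) : ℝ) : EReal) := by
      rw [hmM, ← EReal.coe_add, EReal.coe_lt_coe_iff]
      have : (0:ℝ) < 1/(n+1) := by positivity
      linarith
    exact iInf_lt_iff.mp hlt
  choose z hz using hseq
  have hFztop : ∀ n, F (z n) ≠ ⊤ := by
    intro n
    have h1 : m + ((1/(n+1):ℝ) : EReal) ≠ ⊤ := by
      rw [hmM, ← EReal.coe_add]; exact EReal.coe_ne_top _
    exact ne_top_of_le_ne_top h1 (hz n).le
  have hztop : ∀ n, f (z n) ≠ ⊤ := fun n => ne_top_of_le_ne_top (hFztop n) (hfle (z n))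
  set g : ℕ → ℝ := fun n => (f (z n)).toReal with hgdef
  have hgz : ∀ n, f (z n) = ((g n : ℝ) : EReal) := fun n => (EReal.coe_toReal (hztop n) (hbot _)).symm
  set u : ℕ → ℝ := fun n => g n + c * ‖z n - y‖^2 with hu
  have hFzu : ∀ n, F (z n) = ((u n : ℝ) : EReal) := by
    intro n; rw [hF]; simp only [hu]; rw [hgz n, ← EReal.coe_add]
  have huM : ∀ n, M ≤ u n ∧ u n < M + 1/(n+1) := by
    intro n
    constructor
    · have h2 : m ≤ F (z n) := iInf_le _ (z n)
      rw [hmM, hFzu n, EReal.coe_le_coe_iff] at h2; exact h2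
    · have h2 := hz n
      rw [hmM, hFzu n, ← EReal.coe_add, EReal.coe_lt_coe_iff] at h2; exact h2
  have hpair : ∀ n k : ℕ, c/4 * ‖z n - z k‖^2 ≤ (u n - M)/2 + (u k - M)/2 := by
    intro n k
    set w : X := (1/2 : ℝ) • z n + (1 - (1/2:ℝ)) • z k with hw
    have hconvw := hconv (z n) (z k) (1/2) (by norm_num) (by norm_num)
    rw [hgz n, hgz k, ← EReal.coe_mul, ← EReal.coe_mul, ← EReal.coe_add] at hconvw
    have hmw : m ≤ F w := iInf_le _ w
    have hFw : F w ≤ (((1/2) * g n + (1-1/2) * g k + c * ‖w - y‖^2 : ℝ) : EReal) := by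
      rw [hF]
      calc f w + ((c * ‖w - y‖^2 : ℝ):EReal)
          ≤ (((1/2) * g n + (1 - 1/2) * g k : ℝ):EReal) + ((c * ‖w - y‖^2 : ℝ):EReal) :=
            add_le_add_left hconvw _
        _ = _ := by rw [← EReal.coe_add]
    have hreal : M ≤ (1/2) * g n + (1-1/2) * g k + c * ‖w - y‖^2 := by
      have h3 := hmw.trans hFw
      rwa [hmM, EReal.coe_le_coe_iff] at h3
    have hab : ‖(z n - y) + (z k - y)‖^2 = 2*‖z n - y‖^2 + 2*‖z k - y‖^2 - ‖z n - z k‖^2 := by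
      have h1 := norm_add_sq_real (z n - y) (z k - y)
      have h2 := norm_sub_sq_real (z n - y) (z k - y)
      have h3 : (z n - y) - (z k - y) = z n - z k := by abel
      rw [h3] at h2
      linarith
    have hwid : w - y = (1/2 : ℝ) • ((z n - y) + (z k - y)) := by
      rw [hw]; module
    have hpar : ‖w - y‖^2 = (1/2) * ‖z n - y‖^2 + (1/2) * ‖z k - y‖^2 - (1/4) * ‖z n - z k‖^2 := by
      rw [hwid, norm_smul, mul_pow, Real.norm_eq_abs]
      rw [hab]
      rw [abs_of_pos (by norm_num : (0:ℝ) < 1/2)]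
      ring
    have hun : u n = g n + c * ‖z n - y‖^2 := rfl
    have huk : u k = g k + c * ‖z k - y‖^2 := rfl
    nlinarith [hreal, hpar]
  have hcauchy : CauchySeq z := by
    rw [Metric.cauchySeq_iff]
    intro ε hε
    obtain ⟨N, hN⟩ := exists_nat_gt (4/(c*ε^2) + 1)
    have hNpos : (0:ℝ) < N := by
      have h0 : (0:ℝ) ≤ 4/(c*ε^2) := by positivity
      linarith
    refine ⟨N, fun n hn k hk => ?_⟩
    have h1 := hpair n k
    have h2 : u n - M < 1/(n+1) := by linarith [(huM n).2]
    have h3 : u k - M < 1/(k+1) := by linarith [(huM k).2]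
    have hn1 : (1:ℝ)/(n+1) ≤ 1/(N:ℝ) := by
      apply one_div_le_one_div_of_le hNpos
      have : (N:ℝ) ≤ n := by exact_mod_cast hn
      linarith
    have hk1 : (1:ℝ)/(k+1) ≤ 1/(N:ℝ) := by
      apply one_div_le_one_div_of_le hNpos
      have : (N:ℝ) ≤ k := by exact_mod_cast hk
      linarith
    have hNbig : 4/(c*ε^2) < (N:ℝ) := by linarith
    have hsmall : (1:ℝ)/(N:ℝ) < c*ε^2/4 := by
      rw [div_lt_div_iff₀ hNpos (by norm_num)]
      rw [div_lt_iff₀ (by positivity)] at hNbig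
      nlinarith
    have hd2 : ‖z n - z k‖^2 < ε^2 := by nlinarith
    rw [dist_eq_norm]
    nlinarith [norm_nonneg (z n - z k)]
  obtain ⟨p, hp⟩ := cauchySeq_tendsto_of_complete hcauchy
  have hup : Tendsto u atTop (𝓝 M) := by
    have hub : Tendsto (fun n : ℕ => M + 1/(n+1:ℝ)) atTop (𝓝 M) := by
      have h0 : Tendsto (fun n : ℕ => (1:ℝ)/(n+1)) atTop (𝓝 0) :=
        tendsto_one_div_add_atTop_nhds_zero_nat
      have h1 : Tendsto (fun n : ℕ => M + 1/(n+1:ℝ)) atTop (𝓝 (M + 0)) :=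
        tendsto_const_nhds.add h0
      rwa [add_zero] at h1
    exact tendsto_of_tendsto_of_tendsto_of_le_of_le tendsto_const_nhds hub
      (fun n => (huM n).1) (fun n => (huM n).2.le)
  have hcont : Continuous (fun v : X => c * ‖v - y‖^2) :=
    continuous_const.mul (((continuous_id.sub continuous_const).norm).pow 2)
  have hnt : Tendsto (fun n => c * ‖z n - y‖^2) atTop (𝓝 (c * ‖p - y‖^2)) :=
    (hcont.tendsto p).comp hp
  have hfp : f p ≤ ((M - c*‖p - y‖^2 : ℝ) : EReal) := by
    by_contra hcon
    push_neg at hcon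
    obtain ⟨b, hb1, hb2⟩ := EReal.exists_between_coe_real hcon
    have hev : ∀ᶠ n in atTop, ((b:ℝ) : EReal) < f (z n) := hp.eventually (hlsc p _ hb2)
    have hev2 : ∀ᶠ n in atTop, b + c*‖z n - y‖^2 ≤ u n := by
      filter_upwards [hev] with n hn
      have hb3 : b < g n := by
        rw [hgz n, EReal.coe_lt_coe_iff] at hn; exact hn
      have hun : u n = g n + c * ‖z n - y‖^2 := rfl
      nlinarith
    have hlim : b + c*‖p - y‖^2 ≤ M :=
      le_of_tendsto_of_tendsto (tendsto_const_nhds.add hnt) hup hev2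
    have hb4 : M - c*‖p-y‖^2 < b := by
      rw [EReal.coe_lt_coe_iff] at hb1; exact hb1
    linarith
  have hptop : f p ≠ ⊤ := ne_top_of_le_ne_top (EReal.coe_ne_top _) hfp
  set gp : ℝ := (f p).toReal with hgpdef
  have hgp : f p = ((gp : ℝ) : EReal) := (EReal.coe_toReal hptop (hbot _)).symm
  have hFp : F p = ((gp + c*‖p - y‖^2 : ℝ) : EReal) := by
    rw [hF]; simp only; rw [hgp, ← EReal.coe_add]
  have hFpm : F p ≤ m := by
    rw [hFp, hmM, EReal.coe_le_coe_iff]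
    rw [hgp, EReal.coe_le_coe_iff] at hfp
    linarith
  have hFp_min : ∀ w, F p ≤ F w := fun w => hFpm.trans (iInf_le _ w)
  refine ⟨p, fun w => ?_⟩
  by_cases hw : f w = ⊤
  · rw [hw]; exact le_top
  · set gw : ℝ := (f w).toReal with hgwdef
    have hgw : f w = ((gw : ℝ) : EReal) := (EReal.coe_toReal hw (hbot _)).symm
    have hkey : ∀ t : ℝ, 0 < t → t ≤ 1 →
        0 ≤ (gw - gp) + 2*c*⟪p - y, w - p⟫ + c*t*‖w - p‖^2 := by
      intro t ht0 ht1
      have hcw := hconv w p t ht0.le ht1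
      rw [hgw, hgp, ← EReal.coe_mul, ← EReal.coe_mul, ← EReal.coe_add] at hcw
      have hF2 : F (t • w + (1-t) • p)
          ≤ ((t*gw + (1-t)*gp + c*‖(t • w + (1-t) • p) - y‖^2 : ℝ) : EReal) := by
        rw [hF]
        calc f (t • w + (1-t) • p) + ((c * ‖(t • w + (1-t) • p) - y‖^2 : ℝ):EReal)
            ≤ ((t*gw + (1-t)*gp : ℝ):EReal) + ((c * ‖(t • w + (1-t) • p) - y‖^2 : ℝ):EReal) :=
              add_le_add_left hcw _
          _ = _ := by rw [← EReal.coe_add]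
      have hreal : gp + c*‖p - y‖^2 ≤ t*gw + (1-t)*gp + c*‖(t • w + (1-t) • p) - y‖^2 := by
        have h4 := (hFp_min (t • w + (1-t) • p)).trans hF2
        rw [hFp, EReal.coe_le_coe_iff] at h4; exact h4
      have hid : (t • w + (1-t) • p) - y = (p - y) + t • (w - p) := by module
      have hexp : ‖(t • w + (1-t) • p) - y‖^2
          = ‖p - y‖^2 + 2*(t*⟪p - y, w - p⟫) + t^2*‖w - p‖^2 := by
        rw [hid, norm_add_sq_real, real_inner_smul_right, norm_smul, Real.norm_eq_abs,
          mul_pow, sq_abs]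
      rw [hexp] at hreal
      have ht2 : 0 ≤ t*((gw - gp) + 2*c*⟪p - y, w - p⟫ + c*t*‖w - p‖^2) := by nlinarith
      nlinarith [mul_pos ht0 ht0]
    have hlimins : 0 ≤ (gw - gp) + 2*c*⟪p - y, w - p⟫ := by
      have h0 : Tendsto (fun n : ℕ => (1:ℝ)/(n+1)) atTop (𝓝 0) :=
        tendsto_one_div_add_atTop_nhds_zero_nat
      have hseq2 : Tendsto
          (fun n : ℕ => (gw - gp) + 2*c*⟪p - y, w - p⟫ + c*(1/(n+1))*‖w - p‖^2) atTop
          (𝓝 ((gw - gp) + 2*c*⟪p - y, w - p⟫)) := by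
        have h1 : Tendsto (fun n : ℕ => c*(1/(n+1:ℝ))*‖w - p‖^2) atTop (𝓝 (c*0*‖w - p‖^2)) :=
          (h0.const_mul c).mul_const _
        have h2 : Tendsto (fun n : ℕ => (gw - gp) + 2*c*⟪p - y, w - p⟫ + c*(1/(n+1:ℝ))*‖w - p‖^2)
            atTop (𝓝 ((gw - gp) + 2*c*⟪p - y, w - p⟫ + c*0*‖w - p‖^2)) :=
          tendsto_const_nhds.add h1
        have h3 : (gw - gp) + 2*c*⟪p - y, w - p⟫ + c*0*‖w - p‖^2
            = (gw - gp) + 2*c*⟪p - y, w - p⟫ := by ring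
        rwa [h3] at h2
      apply ge_of_tendsto hseq2
      filter_upwards with n
      apply hkey (1/(n+1)) (by positivity)
      rw [div_le_one (by positivity)]
      have : (0:ℝ) ≤ n := Nat.cast_nonneg n
      linarith
    rw [hgp, hgw]
    have hin : (inner ℝ ((1/lam) • (y - p)) (w - p) : ℝ) = -(2*c*⟪p - y, w - p⟫) := by
      rw [real_inner_smul_left]
      have : (y - p : X) = -(p - y) := by abel
      rw [this, inner_neg_left]
      rw [hc]; field_simp
    rw [hin, ← EReal.coe_add, EReal.coe_le_coe_iff]
    linarith

end aux

/-- KL condition implies growth error bound for proper lsc convex functions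
(Theorem 2.1 / thm:KLGC). Here `f : X → EReal` with values in `(-∞, ∞]` ensured by
properness, the convex subdifferential condition is stated pointwise, and
`d(0, ∂f(x)) ⬝ φ'(...) ≥ 1` is encoded as `1 ≤ φ'(...) * ‖ξ‖` for every subgradient ξ. -/
theorem stmt_0
    {X : Type*} [NormedAddCommGroup X] [InnerProductSpace ℝ X] [CompleteSpace X]
    (f : X → EReal)
    (hproper : (∀ x, f x ≠ ⊥) ∧ ∃ x, f x ≠ ⊤)
    (hlsc : LowerSemicontinuous f)
    (hconv : ∀ x y : X, ∀ t : ℝ, 0 ≤ t → t ≤ 1 →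
      f (t • x + (1 - t) • y) ≤ (t : EReal) * f x + ((1 - t : ℝ) : EReal) * f y)
    (S : Set X) (hS : S = {x | ∀ y, f x ≤ f y}) (hSne : S.Nonempty)
    (xb : X) (hxb : xb ∈ S)
    (r η : ℝ) (hr : 0 < r) (hη : 0 < η)
    (φ φ' : ℝ → ℝ)
    (hφc : ContinuousOn φ (Ico 0 η)) (hφ0 : φ 0 = 0)
    (hφconc : ConcaveOn ℝ (Ico 0 η) φ)
    (hφd : ∀ s ∈ Ioo 0 η, HasDerivAt φ (φ' s) s)
    (hφ'c : ContinuousOn φ' (Ioo 0 η))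
    (hφ'pos : ∀ s ∈ Ioo 0 η, 0 < φ' s)
    (hKL : ∀ x ∈ ball xb r, f xb < f x → f x < f xb + (η : EReal) →
      ∀ ξ : X, (∀ y, f x + (((inner ℝ ξ (y - x) : ℝ)) : EReal) ≤ f y) →
        1 ≤ φ' ((f x).toReal - (f xb).toReal) * ‖ξ‖) :
    ∀ x ∈ ball xb r, f xb ≤ f x → f x < f xb + (η : EReal) →
      infDist x S ≤ 2 * φ ((f x).toReal - (f xb).toReal) := by
  classical
  obtain ⟨hbot, w0, hw0⟩ := hproper
  subst hS
  have hxbmin : ∀ y, f xb ≤ f y := hxb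
  have hxbtop : f xb ≠ ⊤ := ne_top_of_le_ne_top hw0 (hxbmin w0)
  set A : ℝ := (f xb).toReal with hAdef
  have hAxb : f xb = (A : EReal) := (EReal.coe_toReal hxbtop (hbot xb)).symm
  -- monotonicity of φ
  have hderiv : ∀ s ∈ interior (Ico (0:ℝ) η), 0 < deriv φ s := by
    intro s hs
    rw [interior_Ico] at hs
    rw [(hφd s hs).deriv]
    exact hφ'pos s hs
  have hmono : StrictMonoOn φ (Ico 0 η) :=
    strictMonoOn_of_deriv_pos (convex_Ico 0 η) hφc hderiv
  have hφnonneg : ∀ s ∈ Ico (0:ℝ) η, 0 ≤ φ s := by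
    intro s hs
    rcases eq_or_lt_of_le hs.1 with h | h
    · rw [← h, hφ0]
    · rw [← hφ0]; exact (hmono ⟨le_refl 0, hη⟩ hs h).le
  have hφmono : MonotoneOn φ (Ico 0 η) := hmono.monotoneOn
  -- tangent line inequality for concave φ
  have htan : ∀ s ∈ Ioo (0:ℝ) η, ∀ u ∈ Ico (0:ℝ) η, φ u ≤ φ s + φ' s * (u - s) := by
    intro s hs u hu
    have hsI : s ∈ Ico (0:ℝ) η := ⟨hs.1.le, hs.2⟩
    rcases lt_trichotomy u s with h | h | h
    · have hslope := hφconc.le_slope_of_hasDerivAt hu hsI h (hφd s hs)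
      rw [slope_def_field] at hslope
      have hsu : 0 < s - u := by linarith
      have h2 := (le_div_iff₀ hsu).mp hslope
      nlinarith
    · rw [h]; simp
    · have hslope := hφconc.slope_le_of_hasDerivAt hsI hu h (hφd s hs)
      rw [slope_def_field] at hslope
      have hus : 0 < u - s := by linarith
      have h2 := (div_le_iff₀ hus).mp hslope
      nlinarith
  -- φ' is antitone on Ioo 0 η
  have hanti : ∀ a ∈ Ioo (0:ℝ) η, ∀ b ∈ Ioo (0:ℝ) η, a ≤ b → φ' b ≤ φ' a := by
    intro a ha b hb hab
    rcases eq_or_lt_of_le hab with h | h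
    · rw [h]
    · have h1 := htan a ha b ⟨hb.1.le, hb.2⟩
      have h2 := htan b hb a ⟨ha.1.le, ha.2⟩
      nlinarith
  intro x hxball hxlow hxhi
  have hfxtop : f x ≠ ⊤ := by
    intro h
    rw [h, hAxb, ← EReal.coe_add] at hxhi
    exact not_top_lt hxhi
  set g0 : ℝ := (f x).toReal with hg0def
  have hfx : f x = ((g0:ℝ) : EReal) := (EReal.coe_toReal hfxtop (hbot x)).symm
  have ht0nonneg : 0 ≤ g0 - A := by
    have h1 := hxlow; rw [hAxb, hfx, EReal.coe_le_coe_iff] at h1; linarith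
  have ht0lt : g0 - A < η := by
    have h1 := hxhi; rw [hAxb, hfx, ← EReal.coe_add, EReal.coe_lt_coe_iff] at h1; linarith
  have hgoal_eq : (f x).toReal - (f xb).toReal = g0 - A := rfl
  rcases eq_or_lt_of_le ht0nonneg with h0 | h0
  · -- x is itself a minimizer
    have hxS : x ∈ {x | ∀ y, f x ≤ f y} := by
      intro y2
      have hfeq : f x = f xb := by
        rw [hfx, hAxb]
        norm_cast
        linarith
      rw [hfeq]; exact hxbmin y2
    rw [infDist_zero_of_mem hxS, hgoal_eq, ← h0, hφ0]
    norm_num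
  · set t0 : ℝ := g0 - A with ht0def
    have hφt0pos : 0 < φ t0 := by
      rw [← hφ0]
      exact hmono ⟨le_refl 0, hη⟩ ⟨ht0nonneg, ht0lt⟩ h0
    set lam : ℝ := (φ t0)^2 / (4 * t0) with hlamdef
    have hlam : 0 < lam := by positivity
    have hprox := fun (y : X) (hy : f y ≠ ⊤) =>
      klgb_prox_exists f hbot hlsc hconv xb hxbtop hxbmin lam hlam y hy
    set next : X → X := fun y => if h : f y ≠ ⊤ then (hprox y h).choose else y with hnext
    set seq : ℕ → X := fun n => next^[n] x with hseqdef
    have hseq0 : seq 0 = x := rfl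
    have hseqS : ∀ n, seq (n+1) = next (seq n) := by
      intro n; rw [hseqdef]; simp only; rw [Function.iterate_succ_apply']
    have hstep : ∀ y, (h : f y ≠ ⊤) → ∀ z,
        f (next y) + ((inner ℝ ((1/lam) • (y - next y)) (z - next y) : ℝ) : EReal) ≤ f z := by
      intro y h z
      rw [hnext]; simp only [dif_pos h]
      exact (hprox y h).choose_spec z
    have htopdec : ∀ y, (h : f y ≠ ⊤) → f (next y) ≤ f y := by
      intro y h
      have h1 := hstep y h y
      have h2 : (inner ℝ ((1/lam) • (y - next y)) (y - next y) : ℝ) = ‖y - next y‖^2 / lam := by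
        rw [real_inner_smul_left, real_inner_self_eq_norm_sq]; ring
      rw [h2] at h1
      have h3 : (0:EReal) ≤ ((‖y - next y‖^2/lam : ℝ) : EReal) := by
        rw [← EReal.coe_zero, EReal.coe_le_coe_iff]; positivity
      exact (le_add_of_nonneg_right h3).trans h1
    have htop : ∀ n, f (seq n) ≠ ⊤ := by
      intro n; induction n with
      | zero => exact hfxtop
      | succ k ih => rw [hseqS k]; exact ne_top_of_le_ne_top ih (htopdec _ ih)
    have hP : ∀ n, ∀ z,
        f (seq (n+1)) + ((inner ℝ ((1/lam) • (seq n - seq (n+1))) (z - seq (n+1)) : ℝ) : EReal)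
          ≤ f z := by
      intro n z
      rw [hseqS n]
      exact hstep (seq n) (htop n) z
    set g : ℕ → ℝ := fun n => (f (seq n)).toReal with hgdef
    have hg : ∀ n, f (seq n) = ((g n : ℝ) : EReal) :=
      fun n => (EReal.coe_toReal (htop n) (hbot _)).symm
    set a : ℕ → ℝ := fun n => ‖seq (n+1) - seq n‖ with hadef
    have hanonneg : ∀ n, 0 ≤ a n := fun n => norm_nonneg _
    have hAg : ∀ n, A ≤ g n := by
      intro n
      have h1 := hxbmin (seq n)
      rwa [hAxb, hg n, EReal.coe_le_coe_iff] at h1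
    have hdec : ∀ n, g (n+1) + (a n)^2 / lam ≤ g n := by
      intro n
      have h1 := hP n (seq n)
      have h2 : (inner ℝ ((1/lam) • (seq n - seq (n+1))) (seq n - seq (n+1)) : ℝ)
          = (a n)^2 / lam := by
        rw [real_inner_smul_left, real_inner_self_eq_norm_sq]
        rw [norm_sub_rev (seq n) (seq (n+1))]
        ring
      rw [h2, hg n, hg (n+1), ← EReal.coe_add, EReal.coe_le_coe_iff] at h1
      linarith
    have hgmono : ∀ n, g (n+1) ≤ g n := by
      intro n; have h1 := hdec n; linarith [div_nonneg (sq_nonneg (a n)) hlam.le]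
    have hgle : ∀ n, g n ≤ g 0 := by
      intro n; induction n with
      | zero => exact le_refl _
      | succ k ih => exact (hgmono k).trans ih
    have hg00 : g 0 = g0 := rfl
    have hnorm : ∀ n, ‖seq n - xb‖ ≤ ‖x - xb‖ := by
      intro n; induction n with
      | zero => exact le_refl _
      | succ k ih =>
        have h1 := hP k xb
        rw [hAxb, hg (k+1), ← EReal.coe_add, EReal.coe_le_coe_iff, real_inner_smul_left] at h1
        have hin : (inner ℝ (seq k - seq (k+1)) (xb - seq (k+1)) : ℝ) ≤ 0 := by
          nlinarith [hAg (k+1), one_div_pos.mpr hlam, h1]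
        have hid : seq k - xb = (seq k - seq (k+1)) + (seq (k+1) - xb) := by abel
        have hsq := norm_add_sq_real (seq k - seq (k+1)) (seq (k+1) - xb)
        rw [← hid] at hsq
        have hin2 : (inner ℝ (seq k - seq (k+1)) (seq (k+1) - xb) : ℝ)
            = -(inner ℝ (seq k - seq (k+1)) (xb - seq (k+1)) : ℝ) := by
          have h3 : (seq (k+1) - xb : X) = -(xb - seq (k+1)) := by abel
          rw [h3, inner_neg_right]
        have hfinal : ‖seq (k+1) - xb‖^2 ≤ ‖seq k - xb‖^2 := by
          nlinarith [sq_nonneg ‖seq k - seq (k+1)‖]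
        nlinarith [norm_nonneg (seq (k+1) - xb), norm_nonneg (seq k - xb), ih,
          norm_nonneg (x - xb)]
    have hball2 : ∀ n, seq n ∈ ball xb r := by
      intro n
      rw [mem_ball, dist_eq_norm]
      have h1 : ‖x - xb‖ < r := by rw [← dist_eq_norm]; exact mem_ball.mp hxball
      exact lt_of_le_of_lt (hnorm n) h1
    have hKLn : ∀ n, 0 < g (n+1) - A → lam ≤ φ' (g (n+1) - A) * a n := by
      intro n hpos
      have hlt1 : f xb < f (seq (n+1)) := by
        rw [hAxb, hg (n+1), EReal.coe_lt_coe_iff]; linarith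
      have hlt2 : f (seq (n+1)) < f xb + (η : EReal) := by
        rw [hAxb, hg (n+1), ← EReal.coe_add, EReal.coe_lt_coe_iff]
        have h3 : g (n+1) ≤ g 0 := hgle (n+1)
        have h10 : g 0 = g0 := rfl
        linarith [ht0lt]
      have hres := hKL (seq (n+1)) (hball2 (n+1)) hlt1 hlt2
        ((1/lam) • (seq n - seq (n+1))) (hP n)
      have hTR : (f (seq (n+1))).toReal - (f xb).toReal = g (n+1) - A := rfl
      rw [hTR] at hres
      have hnorm2 : ‖(1/lam : ℝ) • (seq n - seq (n+1))‖ = a n / lam := by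
        rw [norm_smul, Real.norm_eq_abs, abs_of_pos (by positivity : (0:ℝ) < 1/lam),
          norm_sub_rev (seq n) (seq (n+1))]
        ring
      rw [hnorm2] at hres
      have h5 : 1 * lam ≤ (φ' (g (n+1) - A) * (a n / lam)) * lam :=
        mul_le_mul_of_nonneg_right hres hlam.le
      have h6 : (φ' (g (n+1) - A) * (a n / lam)) * lam = φ' (g (n+1) - A) * a n := by
        field_simp
      rw [h6, one_mul] at h5
      exact h5
    have hstep5 : ∀ m : ℕ, 2 * a (m+1) ≤ (φ (g (m+1) - A) - φ (g (m+2) - A)) + a m := by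
      intro m
      have hd := hdec (m+1)
      have h10 : g 0 = g0 := rfl
      have ht1 : g (m+1) - A < η := by linarith [hgle (m+1), ht0lt]
      have ht2 : (0:ℝ) ≤ g (m+2) - A := by linarith [hAg (m+2)]
      by_cases hpos : 0 < g (m+1) - A
      · have hKL1 := hKLn m hpos
        have hm1 : g (m+1) - A ∈ Ioo (0:ℝ) η := ⟨hpos, ht1⟩
        have hm2 : g (m+2) - A ∈ Ico (0:ℝ) η :=
          ⟨ht2, by linarith [hgmono (m+1)]⟩
        have htang := htan _ hm1 _ hm2
        have hφ'p := hφ'pos _ hm1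
        have h1 : (a (m+1))^2 ≤ lam * ((g (m+1) - A) - (g (m+2) - A)) := by
          have h9 : (a (m+1))^2 / lam ≤ g (m+1) - g (m+2) := by linarith
          calc (a (m+1))^2 = ((a (m+1))^2 / lam) * lam := by field_simp
            _ ≤ (g (m+1) - g (m+2)) * lam := mul_le_mul_of_nonneg_right h9 hlam.le
            _ = lam * ((g (m+1) - A) - (g (m+2) - A)) := by ring
        have h2 : φ' (g (m+1) - A) * ((g (m+1) - A) - (g (m+2) - A))
            ≤ φ (g (m+1) - A) - φ (g (m+2) - A) := by nlinarith
        have hΔ : 0 ≤ φ (g (m+1) - A) - φ (g (m+2) - A) := by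
          nlinarith [hgmono (m+1), mul_nonneg hφ'p.le (by linarith [hgmono (m+1)] :
            (0:ℝ) ≤ (g (m+1) - A) - (g (m+2) - A))]
        have c1 : (a (m+1))^2 * φ' (g (m+1) - A)
            ≤ (lam * ((g (m+1) - A) - (g (m+2) - A))) * φ' (g (m+1) - A) :=
          mul_le_mul_of_nonneg_right h1 hφ'p.le
        have c2 : (lam * ((g (m+1) - A) - (g (m+2) - A))) * φ' (g (m+1) - A)
            ≤ lam * (φ (g (m+1) - A) - φ (g (m+2) - A)) := by
          nlinarith [mul_le_mul_of_nonneg_left h2 hlam.le]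
        have c3 : lam * (φ (g (m+1) - A) - φ (g (m+2) - A))
            ≤ (φ' (g (m+1) - A) * a m) * (φ (g (m+1) - A) - φ (g (m+2) - A)) :=
          mul_le_mul_of_nonneg_right hKL1 hΔ
        have hkey : (a (m+1))^2 ≤ (φ (g (m+1) - A) - φ (g (m+2) - A)) * a m := by
          nlinarith [c1, c2, c3, hφ'p]
        nlinarith [hkey, hanonneg (m+1), hanonneg m, hΔ,
          sq_nonneg ((φ (g (m+1) - A) - φ (g (m+2) - A)) - a m),
          sq_nonneg ((φ (g (m+1) - A) - φ (g (m+2) - A)) + a m - 2 * a (m+1))]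
      · push_neg at hpos
        have hz1 : g (m+1) - A = 0 := le_antisymm hpos (by linarith [hAg (m+1)])
        have hz3 : a (m+1) = 0 := by
          have h9 : (a (m+1))^2 / lam ≤ 0 := by linarith [hAg (m+2)]
          have h7 : (a (m+1))^2 ≤ 0 := by
            calc (a (m+1))^2 = ((a (m+1))^2 / lam) * lam := by field_simp
              _ ≤ 0 * lam := mul_le_mul_of_nonneg_right h9 hlam.le
              _ = 0 := by ring
          have h8 : a (m+1) ≤ 0 := by nlinarith [hanonneg (m+1)]
          exact le_antisymm h8 (hanonneg (m+1))
        have hz2 : g (m+2) - A = 0 := by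
          have := hAg (m+2)
          have h8 : g (m+2) ≤ g (m+1) := hgmono (m+1)
          linarith
        rw [hz1, hz2, hz3]
        linarith [hanonneg m]
    set Esum : ℕ → ℝ := fun N => (∑ k ∈ Finset.range (N+1), a k) + a N + φ (g (N+1) - A)
      with hEdef
    have hEstep : ∀ N, Esum (N+1) ≤ Esum N := by
      intro N
      have h1 : Esum (N+1) = (∑ k ∈ Finset.range (N+1), a k) + a (N+1) + a (N+1)
          + φ (g (N+2) - A) := by
        have h0' : Esum (N+1) = (∑ k ∈ Finset.range (N+2), a k) + a (N+1)
            + φ (g (N+2) - A) := rfl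
        rw [h0', Finset.sum_range_succ]; try ring
      have h2 : Esum N = (∑ k ∈ Finset.range (N+1), a k) + a N + φ (g (N+1) - A) := rfl
      rw [h1, h2]
      linarith [hstep5 N]
    have hEmono : ∀ N, Esum N ≤ Esum 0 := by
      intro N; induction N with
      | zero => exact le_refl _
      | succ k ih => exact (hEstep k).trans ih
    have ha0 : a 0 ≤ φ t0 / 2 := by
      have h1 : (a 0)^2 ≤ lam * t0 := by
        have h2 := hdec 0
        have h3 := hAg 1
        have h9 : (a 0)^2 / lam ≤ g 0 - g 1 := by linarith
        calc (a 0)^2 = ((a 0)^2 / lam) * lam := by field_simp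
          _ ≤ (g 0 - g 1) * lam := mul_le_mul_of_nonneg_right h9 hlam.le
          _ ≤ t0 * lam := by
              have : g 0 - g 1 ≤ t0 := by
                have h10 : g 0 = g0 := rfl
                linarith [hAg 1]
              exact mul_le_mul_of_nonneg_right this hlam.le
          _ = lam * t0 := by ring
      have h2 : lam * t0 = (φ t0)^2 / 4 := by
        rw [hlamdef]; field_simp
      nlinarith [hanonneg 0, hφt0pos]
    have hmemIco : ∀ n, g n - A ∈ Ico (0:ℝ) η := by
      intro n
      have h10 : g 0 = g0 := rfl
      exact ⟨by linarith [hAg n], by linarith [hgle n, ht0lt]⟩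
    have hφt1 : φ (g 1 - A) ≤ φ t0 := by
      apply hφmono (hmemIco 1) ⟨ht0nonneg, ht0lt⟩
      have := hgmono 0
      have : g 1 ≤ g 0 := hgmono 0
      linarith
    have hbound : ∀ N, (∑ k ∈ Finset.range N, a k) ≤ 2 * φ t0 := by
      intro N
      match N with
      | 0 => simp; positivity
      | Nat.succ M =>
        have h3 := hEmono M
        have h4 : Esum 0 = a 0 + a 0 + φ (g 1 - A) := by
          rw [hEdef]; simp
        have h5 : 0 ≤ φ (g (M+1) - A) := hφnonneg _ (hmemIco (M+1))
        have h6 : (∑ k ∈ Finset.range (M+1), a k) ≤ Esum M - a M - φ (g (M+1) - A) := by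
          rw [hEdef]; simp only; linarith
        have h7 := hanonneg M
        have h8 := hanonneg 0
        linarith
    have hdista : ∀ n, dist (seq n) (seq (n+1)) = a n := by
      intro n; rw [dist_eq_norm, norm_sub_rev]
    have hsumm : Summable (fun n => dist (seq n) (seq (n+1))) := by
      apply summable_of_sum_range_le (fun n => dist_nonneg)
      intro n
      calc ∑ i ∈ Finset.range n, dist (seq i) (seq (i+1))
          = ∑ i ∈ Finset.range n, a i := by
            apply Finset.sum_congr rfl; intro i _; exact hdista i
        _ ≤ 2 * φ t0 := hbound n
    have hsumma : Summable a := hsumm.congr hdista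
    have hcauchy : CauchySeq seq := cauchySeq_of_summable_dist hsumm
    obtain ⟨zl, hzl⟩ := cauchySeq_tendsto_of_complete hcauchy
    have hdx : dist x zl ≤ 2 * φ t0 := by
      have h1 : dist (seq 0) zl ≤ ∑' n, dist (seq n) (seq (n+1)) :=
        dist_le_tsum_dist_of_tendsto₀ hsumm hzl
      have h2 : (∑' n, dist (seq n) (seq (n+1))) ≤ 2 * φ t0 := by
        apply Summable.tsum_le_of_sum_range_le hsumm
        intro n
        calc ∑ i ∈ Finset.range n, dist (seq i) (seq (i+1))
            = ∑ i ∈ Finset.range n, a i := by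
              apply Finset.sum_congr rfl; intro i _; exact hdista i
          _ ≤ 2 * φ t0 := hbound n
      rw [hseq0] at h1
      linarith
    -- f (seq n) - f* tends to 0
    have hantit : Antitone (fun n => g n - A) :=
      antitone_nat_of_succ_le (fun n => by show g (n+1) - A ≤ g n - A; linarith [hgmono n])
    have hbdd : BddBelow (Set.range (fun n => g n - A)) := by
      refine ⟨0, ?_⟩
      rintro v ⟨n, rfl⟩
      simp only
      linarith [hAg n]
    have htendδ : Tendsto (fun n => g n - A) atTop (𝓝 (⨅ n, (g n - A))) :=
      tendsto_atTop_ciInf hantit hbdd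
    have hδnonneg : 0 ≤ ⨅ n, (g n - A) := le_ciInf (fun n => by linarith [hAg n])
    have hδ0 : (⨅ n, (g n - A)) = 0 := by
      by_contra hne
      have hδpos : 0 < ⨅ n, (g n - A) := lt_of_le_of_ne hδnonneg (Ne.symm hne)
      have hδle : (⨅ n, (g n - A)) ≤ g 0 - A := ciInf_le hbdd 0
      have h10 : g 0 = g0 := rfl
      have hδlt : (⨅ n, (g n - A)) < η := lt_of_le_of_lt hδle (by rw [h10]; exact ht0lt)
      have hδmem : (⨅ n, (g n - A)) ∈ Ioo (0:ℝ) η := ⟨hδpos, hδlt⟩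
      have hφ'δ := hφ'pos _ hδmem
      have halow : ∀ n, lam / φ' (⨅ n, (g n - A)) ≤ a n := by
        intro n
        have hposn : 0 < g (n+1) - A := lt_of_lt_of_le hδpos (ciInf_le hbdd (n+1))
        have hKL1 := hKLn n hposn
        have hmem : g (n+1) - A ∈ Ioo (0:ℝ) η := ⟨hposn, (hmemIco (n+1)).2⟩
        have hle := hanti _ hδmem _ hmem (ciInf_le hbdd (n+1))
        rw [div_le_iff₀ hφ'δ]
        nlinarith [hanonneg n]
      have haz : Tendsto a atTop (𝓝 0) := hsumma.tendsto_atTop_zero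
      have hev := haz.eventually_lt_const (by positivity : (0:ℝ) < lam / φ' (⨅ n, (g n - A)))
      obtain ⟨n, hn⟩ := hev.exists
      linarith [halow n]
    have hzlS : zl ∈ {x | ∀ y, f x ≤ f y} := by
      intro y2
      refine le_trans ?_ (hxbmin y2)
      by_contra hcon
      push_neg at hcon
      rw [hAxb] at hcon
      obtain ⟨b, hb1, hb2⟩ := EReal.exists_between_coe_real hcon
      have hev := hzl.eventually (hlsc zl _ hb2)
      rw [hδ0] at htendδ
      have hbA : (0:ℝ) < b - A := by rw [EReal.coe_lt_coe_iff] at hb1; linarith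
      have hev2 := htendδ.eventually_lt_const hbA
      obtain ⟨n, hn1, hn2⟩ := (hev.and hev2).exists
      rw [hg n, gt_iff_lt, EReal.coe_lt_coe_iff] at hn1
      have hn2' : g n - A < b - A := hn2
      linarith
    have hinf : infDist x {x | ∀ y, f x ≤ f y} ≤ dist x zl := infDist_le_dist_of_mem hzlS
    have hfin : (2 : ℝ) * φ t0 = 2 * φ ((f x).toReal - (f xb).toReal) := rfl
    calc infDist x {x | ∀ y, f x ≤ f y} ≤ dist x zl := hinf
      _ ≤ 2 * φ t0 := hdx
      _ = 2 * φ ((f x).toReal - (f xb).toReal) := hfin
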